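/- For every integer t ≥ 0 and every j ∈ ℤ, the set {n ∈ ℕ : s(n+t) - s(n) = j} is a finite union of arithmetic progressions (possibly empty). -/

import Mathlib

namespace CusickAux

/-- binary digit sum -/
def s (n : ℕ) : ℕ := (Nat.digits 2 n).sum

lemma s_zero : s 0 = 0 := by simp [s]

lemma s_rec {n : ℕ} (hn : 0 < n) : s n = n % 2 + s (n / 2) := by
  unfold s
  rw [Nat.digits_def' (by norm_num : (1:ℕ) < 2) hn]
  simp

/-- Lemma A -/
lemma s_add_pow_mul (M : ℕ) : ∀ a b : ℕ, a < 2 ^ M → s (a + 2 ^ M * b) = s a + s b := by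
  induction M with
  | zero =>
    intro a b ha
    interval_cases a
    simp [s_zero]
  | succ M ih =>
    intro a b ha
    rcases Nat.eq_zero_or_pos (a + 2 ^ (M + 1) * b) with h | h
    · have ha0 : a = 0 := by omega
      have hb0 : b = 0 := by
        rcases Nat.eq_zero_or_pos b with h' | h'
        · exact h'
        · exfalso; nlinarith [Nat.one_le_two_pow (n := M + 1)]
      simp [ha0, hb0, s_zero]
    · rw [s_rec h]
      have he : 2 ^ (M + 1) * b = 2 * (2 ^ M * b) := by ring
      have hmod : (a + 2 ^ (M + 1) * b) % 2 = a % 2 := by omega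
      have hdiv : (a + 2 ^ (M + 1) * b) / 2 = a / 2 + 2 ^ M * b := by omega
      rw [hmod, hdiv, ih (a / 2) b (by omega)]
      rcases Nat.eq_zero_or_pos a with h0 | h0
      · simp [h0, s_zero]
      · rw [s_rec h0]; ring

/-- Lemma B -/
lemma s_pow_sub_one (k : ℕ) : s (2 ^ k - 1) = k := by
  induction k with
  | zero => simp [s_zero]
  | succ k ih =>
    have hp : (1:ℕ) ≤ 2 ^ k := Nat.one_le_two_pow
    have h2 : 2 ^ (k + 1) - 1 = 2 * (2 ^ k - 1) + 1 := by
      have : (2:ℕ) ^ (k+1) = 2 * 2 ^ k := by ring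
      omega
    have h1 : (0:ℕ) < 2 ^ (k + 1) - 1 := by omega
    rw [s_rec h1, h2]
    have e1 : (2 * (2 ^ k - 1) + 1) % 2 = 1 := by omega
    have e2 : (2 * (2 ^ k - 1) + 1) / 2 = 2 ^ k - 1 := by omega
    rw [e1, e2, ih]; omega

/-- Lemma C -/
lemma s_le (k : ℕ) : ∀ u : ℕ, u < 2 ^ k → s u ≤ k := by
  induction k with
  | zero => intro u hu; interval_cases u; simp [s_zero]
  | succ k ih =>
    intro u hu
    rcases Nat.eq_zero_or_pos u with h0 | h0
    · simp [h0, s_zero]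
    · rw [s_rec h0]
      have hpow : (2:ℕ) ^ (k+1) = 2 * 2 ^ k := by ring
      have : s (u / 2) ≤ k := ih _ (by omega)
      omega

/-- Lemma D -/
lemma s_succ_le (q : ℕ) : s (q + 1) ≤ s q + 1 := by
  induction q using Nat.strong_induction_on with
  | _ q ih =>
    rcases Nat.eq_zero_or_pos q with h0 | h0
    · subst h0
      have : s 1 = 1 := by rw [s_rec (by norm_num)]; simp [s_zero]
      simp [this, s_zero]
    rcases Nat.even_or_odd q with he | ho
    · obtain ⟨m, rfl⟩ := he
      rw [s_rec (by omega : 0 < m + m + 1), s_rec h0]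
      have h1 : (m + m + 1) % 2 = 1 := by omega
      have h2 : (m + m + 1) / 2 = m := by omega
      have h3 : (m + m) % 2 = 0 := by omega
      have h4 : (m + m) / 2 = m := by omega
      rw [h1, h2, h3, h4]; omega
    · obtain ⟨m, rfl⟩ := ho
      rw [s_rec (by omega : 0 < 2 * m + 1 + 1), s_rec (by omega : 0 < 2 * m + 1)]
      have h1 : (2 * m + 1 + 1) % 2 = 0 := by omega
      have h2 : (2 * m + 1 + 1) / 2 = m + 1 := by omega
      have h3 : (2 * m + 1) % 2 = 1 := by omega
      have h4 : (2 * m + 1) / 2 = m := by omega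
      rw [h1, h2, h3, h4]
      have := ih m (by omega)
      omega

end CusickAux

open CusickAux in
/-- For every `t ≥ 0` and every integer `j`, the set
`{n : s(n+t) - s(n) = j}` is a finite (possibly empty) union of arithmetic
progressions. -/
theorem cusick_stmt4 (t : ℕ) (j : ℤ) :
    ∃ P : Finset (ℕ × ℕ),
      {n : ℕ | ((Nat.digits 2 (n + t)).sum : ℤ) - ((Nat.digits 2 n).sum : ℤ) = j}
        = ⋃ p ∈ P, {m : ℕ | ∃ k : ℕ, m = p.1 + p.2 * k} := by
  classical
  obtain ⟨L, hL⟩ : ∃ L, L = t := ⟨t, rfl⟩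
  obtain ⟨K, hK⟩ : ∃ K, K = L + 2 + j.natAbs := ⟨_, rfl⟩
  obtain ⟨M, hM⟩ : ∃ M, M = L + K := ⟨_, rfl⟩
  have htL : t < 2 ^ L := hL ▸ (Nat.lt_two_pow_self (n := t))
  have hLM : L < M := by omega
  have htM : t < 2 ^ M := lt_of_lt_of_le htL (Nat.pow_le_pow_right (by norm_num) (by omega))
  have hMpos : 0 < 2 ^ M := Nat.pow_pos (by norm_num)
  have hpow : (2:ℕ) ^ M = 2 ^ L * 2 ^ K := by rw [hM, pow_add]
  obtain ⟨f, hf⟩ : ∃ f : ℕ → ℤ, f = fun n => (s (n + t) : ℤ) - (s n : ℤ) := ⟨_, rfl⟩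
  -- bad case bound
  have bad : ∀ n : ℕ, 2 ^ M ≤ n % 2 ^ M + t → f n < j := by
    intro n hbad
    obtain ⟨r, hr⟩ : ∃ r, r = n % 2 ^ M := ⟨_, rfl⟩
    obtain ⟨q, hq⟩ : ∃ q, q = n / 2 ^ M := ⟨_, rfl⟩
    rw [← hr] at hbad
    have hrlt : r < 2 ^ M := hr ▸ Nat.mod_lt _ hMpos
    have hdm := Nat.div_add_mod n (2 ^ M)
    rw [← hr, ← hq] at hdm
    have hn : n = r + 2 ^ M * q := by omega
    obtain ⟨u, hu⟩ : ∃ u, u = r + t - 2 ^ M := ⟨_, rfl⟩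
    have hult : u < 2 ^ L := by omega
    have hnt : n + t = u + 2 ^ M * (q + 1) := by
      have e : 2 ^ M * (q + 1) = 2 ^ M * q + 2 ^ M := by ring
      omega
    have h1 : s (n + t) = s u + s (q + 1) := by
      rw [hnt]; exact s_add_pow_mul M u (q + 1) (by omega)
    have h2L : (0:ℕ) < 2 ^ L := Nat.pow_pos (by norm_num)
    obtain ⟨d, hd⟩ : ∃ d, d = r / 2 ^ L := ⟨_, rfl⟩
    obtain ⟨r', hr'⟩ : ∃ r', r' = r % 2 ^ L := ⟨_, rfl⟩
    have hr'lt : r' < 2 ^ L := hr' ▸ Nat.mod_lt _ h2L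
    have hdm2 := Nat.div_add_mod r (2 ^ L)
    rw [← hr', ← hd] at hdm2
    have hrd : r = r' + 2 ^ L * d := by omega
    have hd1 : d < 2 ^ K := by
      by_contra h
      push_neg at h
      have h5 : 2 ^ L * 2 ^ K ≤ 2 ^ L * d := Nat.mul_le_mul_left _ h
      omega
    have hd2 : 2 ^ K - 1 ≤ d := by
      by_contra h
      push_neg at h
      have h5 : 2 ^ L * (d + 2) ≤ 2 ^ L * 2 ^ K := Nat.mul_le_mul_left _ (by omega)
      have h6 : 2 ^ L * (d + 2) = 2 ^ L * d + 2 ^ L + 2 ^ L := by ring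
      omega
    have hdval : d = 2 ^ K - 1 := by omega
    have h2 : s r = s r' + K := by
      rw [hrd, s_add_pow_mul L r' d hr'lt, hdval, s_pow_sub_one]
    have h3 : s n = s r + s q := by
      rw [hn]; exact s_add_pow_mul M r q hrlt
    have hsu : s u ≤ L := s_le L u hult
    have hsq : s (q + 1) ≤ s q + 1 := s_succ_le q
    have hfn : f n = (s u : ℤ) + s (q + 1) - s r' - K - s q := by
      rw [hf]; simp only
      rw [h1, h3, h2]
      push_cast
      ring
    rw [hfn]
    omega
  -- periodicity
  have key : ∀ n : ℕ, f n = j ↔ f (n % 2 ^ M) = j := by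
    intro n
    obtain ⟨r, hr⟩ : ∃ r, r = n % 2 ^ M := ⟨_, rfl⟩
    rw [← hr]
    obtain ⟨q, hq⟩ : ∃ q, q = n / 2 ^ M := ⟨_, rfl⟩
    have hrlt : r < 2 ^ M := hr ▸ Nat.mod_lt _ hMpos
    rcases lt_or_ge (r + t) (2 ^ M) with hgood | hbad
    · have hdm := Nat.div_add_mod n (2 ^ M)
      rw [← hr, ← hq] at hdm
      have hn : n = r + 2 ^ M * q := by omega
      have h1 : s (n + t) = s (r + t) + s q := by
        conv_lhs => rw [hn]
        rw [show r + 2 ^ M * q + t = (r + t) + 2 ^ M * q by ring]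
        exact s_add_pow_mul M _ _ hgood
      have h2 : s n = s r + s q := by
        conv_lhs => rw [hn]
        exact s_add_pow_mul M _ _ hrlt
      rw [hf]; simp only
      rw [h1, h2]
      push_cast
      constructor <;> intro h <;> linarith
    · have b1 := bad n (by rw [← hr]; omega)
      have b2 := bad r (by rw [Nat.mod_eq_of_lt hrlt]; exact hbad)
      constructor <;> intro h <;> omega
  -- build the finset
  refine ⟨((Finset.range (2 ^ M)).filter (fun a => f a = j)).image (fun a => (a, 2 ^ M)), ?_⟩
  ext n
  have hmem : (((Nat.digits 2 (n + t)).sum : ℤ) - ((Nat.digits 2 n).sum : ℤ) = j) ↔ f n = j := by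
    rw [hf]; simp only [s]
  simp only [Set.mem_setOf_eq, Set.mem_iUnion, Finset.mem_image, Finset.mem_filter,
    Finset.mem_range, exists_prop]
  rw [hmem]
  constructor
  · intro hn
    refine ⟨(n % 2 ^ M, 2 ^ M), ⟨n % 2 ^ M, ⟨Nat.mod_lt _ hMpos, (key n).mp hn⟩, rfl⟩,
      n / 2 ^ M, ?_⟩
    simp only
    have := Nat.div_add_mod n (2 ^ M)
    omega
  · rintro ⟨p, ⟨a, ⟨ha, hfa⟩, rfl⟩, k, hk⟩
    simp only at hk
    have hna : n % 2 ^ M = a := by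
      rw [hk, Nat.add_mul_mod_self_left, Nat.mod_eq_of_lt ha]
    exact (key n).mpr (by rw [hna]; exact hfa)
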